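/- Let a and a-valid sequences be as above. Order a-valid sequences so that shorter sequences precede longer ones and sequences of equal length are ordered lexicographically; the a-Zeckendorf representation of N is the N-th sequence in this order. Then for every positive integer N, if t is the unique integer with a_t ≤ N < a_{t+1}, the a-Zeckendorf representation of N has exactly t+1 digits. -/

import Mathlib

/-- `Λ_j = λ₁ + ⋯ + λ_j`. -/
def Lam (lam : ℕ → ℕ) (j : ℕ) : ℕ := ∑ i ∈ Finset.Icc 1 j, lam i

/-- `μ_ℓ` is the minimum index `j` with `Λ_j > ℓ`. -/
noncomputable def mu (lam : ℕ → ℕ) (ℓ : ℕ) : ℕ := sInf {j : ℕ | ℓ < Lam lam j}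

/-- An `a`-valid digit sequence, as a list `[d_0, d_1, …, d_M]`
(least significant digit first). -/
def AValid (lam : ℕ → ℕ) (k : ℕ) (l : List ℕ) : Prop :=
  l ≠ [] ∧ (∀ x ∈ l, x < Lam lam k) ∧ l.getLast? ≠ some 0 ∧
  ∀ i j : ℕ, i < j → j < i + mu lam (l.getD i 0) → j < l.length → l.getD j 0 = 0

/-- The ordering on digit sequences: shorter sequences come first, and
sequences of equal length are compared lexicographically (reading from the
most significant digit, which is the last entry of our lists). -/
def ZOrd (l₁ l₂ : List ℕ) : Prop :=
  l₁.length < l₂.length ∨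
    (l₁.length = l₂.length ∧ List.Lex (· < ·) l₁.reverse l₂.reverse)


/- ## List helpers -/

lemma getD_drop (l : List ℕ) (s i : ℕ) : (l.drop s).getD i 0 = l.getD (s + i) 0 := by
  induction l generalizing s i with
  | nil => simp
  | cons x t ih =>
    cases s with
    | zero => simp
    | succ s => simpa [Nat.succ_add] using ih s i

lemma getD_append_rep (l : List ℕ) (s i : ℕ) :
    (l ++ List.replicate s 0).getD i 0 = l.getD i 0 := by
  induction l generalizing i with
  | nil =>
    simp only [List.nil_append]
    induction s generalizing i with
    | zero => simp
    | succ s ih =>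
      cases i with
      | zero => simp
      | succ i => simpa using ih i
  | cons x t ih =>
    cases i with
    | zero => simp
    | succ i => simpa using ih i

lemma eq_rep_append (t : List ℕ) (r : ℕ) (hr : r ≤ t.length)
    (h : ∀ j < r, t.getD j 0 = 0) : t = List.replicate r 0 ++ t.drop r := by
  induction r generalizing t with
  | zero => simp
  | succ r ih =>
    cases t with
    | nil => simp at hr
    | cons x t' =>
      have hx : x = 0 := h 0 (Nat.succ_pos r)
      have := ih t' (by simpa using hr) (fun j hj => by
        have := h (j+1) (by omega); simpa using this)
      simp only [List.replicate_succ, List.cons_append, List.drop_succ_cons]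
      rw [hx, ← this]

lemma strip_zeros (w : List ℕ) :
    ∃ l s, w = l ++ List.replicate s 0 ∧ (l = [] ∨ l.getLast? ≠ some 0) := by
  induction w using List.reverseRecOn with
  | nil => exact ⟨[], 0, by simp, Or.inl rfl⟩
  | append_singleton xs x ih =>
    rcases eq_or_ne x 0 with rfl | hx
    · obtain ⟨l, s, heq, hl⟩ := ih
      exact ⟨l, s+1, by rw [heq]; simp [List.replicate_succ'], hl⟩
    · exact ⟨xs ++ [x], 0, by simp, Or.inr (by rw [List.getLast?_concat]; simpa using hx)⟩

lemma lex_irrefl (l : List ℕ) : ¬ List.Lex (· < ·) l l := by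
  induction l with
  | nil => intro h; cases h
  | cons x t ih => intro h; cases h with
    | cons h => exact ih h
    | rel h => exact lt_irrefl _ h

/- ## Lam / mu lemmas -/

section LamMu
variable (k : ℕ) (lam : ℕ → ℕ)

lemma Lam_zero : Lam lam 0 = 0 := by simp [Lam]

lemma Lam_succ (j : ℕ) : Lam lam (j + 1) = Lam lam j + lam (j + 1) := by
  unfold Lam; rw [Finset.sum_Icc_succ_top (by omega)]

lemma Lam_mono : Monotone (Lam lam) := by
  intro i j hij
  exact Finset.sum_le_sum_of_subset (Finset.Icc_subset_Icc le_rfl hij)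

lemma Lam_pos (h1 : 1 ≤ lam 1) {j : ℕ} (hj : 1 ≤ j) : 1 ≤ Lam lam j := by
  calc 1 ≤ lam 1 := h1
  _ ≤ Lam lam 1 := by simp [Lam]
  _ ≤ Lam lam j := Lam_mono lam hj

lemma mu_mem {d : ℕ} (hd : d < Lam lam k) : d < Lam lam (mu lam d) :=
  Nat.sInf_mem (⟨k, hd⟩ : {j : ℕ | d < Lam lam j}.Nonempty)

lemma mu_le_k {d : ℕ} (hd : d < Lam lam k) : mu lam d ≤ k := Nat.sInf_le hd

lemma mu_pos {d : ℕ} (hd : d < Lam lam k) : 1 ≤ mu lam d := by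
  rcases Nat.eq_zero_or_pos (mu lam d) with h | h
  · exfalso
    have := mu_mem k lam hd
    rw [h, Lam_zero] at this
    omega
  · exact h

lemma mu_upward (d : ℕ) : ∀ k₁ k₂ : ℕ, k₁ ≤ k₂ →
    k₁ ∈ {j : ℕ | d < Lam lam j} → k₂ ∈ {j : ℕ | d < Lam lam j} :=
  fun _ _ h h1' => lt_of_lt_of_le h1' (Lam_mono lam h)

lemma mu_eq_iff {d j : ℕ} (hj : 1 ≤ j) :
    mu lam d = j ↔ (d < Lam lam j ∧ Lam lam (j-1) ≤ d) := by
  obtain ⟨j', rfl⟩ : ∃ j', j = j' + 1 := ⟨j - 1, by omega⟩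
  rw [mu, Nat.sInf_upward_closed_eq_succ_iff (mu_upward lam d) j']
  simp only [Set.mem_setOf_eq, Nat.add_sub_cancel, not_lt]

lemma mu_zero_eq_one (h1 : 1 ≤ lam 1) : mu lam 0 = 1 := by
  rw [mu_eq_iff lam le_rfl]
  constructor
  · exact Lam_pos lam h1 le_rfl
  · simp [Lam_zero]

lemma lam_eq_sub (j : ℕ) (hj : 1 ≤ j) : lam j = Lam lam j - Lam lam (j-1) := by
  obtain ⟨j', rfl⟩ : ∃ j', j = j' + 1 := ⟨j - 1, by omega⟩
  rw [Lam_succ]; simp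

lemma fiber_eq (j : ℕ) (hj : j ∈ Finset.Icc 1 k) :
    (Finset.range (Lam lam k)).filter (fun d => mu lam d = j) =
      Finset.Ico (Lam lam (j-1)) (Lam lam j) := by
  simp only [Finset.mem_Icc] at hj
  ext d
  simp only [Finset.mem_filter, Finset.mem_range, Finset.mem_Ico]
  constructor
  · rintro ⟨_, hmu⟩
    have := (mu_eq_iff lam hj.1).mp hmu
    exact ⟨this.2, this.1⟩
  · rintro ⟨h1', h2'⟩
    refine ⟨lt_of_lt_of_le h2' (Lam_mono lam hj.2), (mu_eq_iff lam hj.1).mpr ⟨h2', h1'⟩⟩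

lemma fiber_card (j : ℕ) (hj : j ∈ Finset.Icc 1 k) :
    ((Finset.range (Lam lam k)).filter (fun d => mu lam d = j)).card = lam j := by
  rw [fiber_eq k lam j hj, Nat.card_Ico, ← lam_eq_sub lam j (Finset.mem_Icc.mp hj).1]

end LamMu

open Classical in
/-- unrestricted gap condition -/
def Gap (lam : ℕ → ℕ) (l : List ℕ) : Prop :=
  ∀ i j : ℕ, i < j → j < i + mu lam (l.getD i 0) → l.getD j 0 = 0

lemma gap_nil (lam : ℕ → ℕ) : Gap lam [] := by
  intro i j _ _; simp

lemma getD_rep (n i : ℕ) : (List.replicate n (0:ℕ)).getD i 0 = 0 := by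
  induction n generalizing i with
  | zero => simp
  | succ n ih => cases i with
    | zero => simp
    | succ i => simpa using ih i

lemma gap_rep (lam : ℕ → ℕ) (n : ℕ) : Gap lam (List.replicate n 0) := by
  intro i j _ _; exact getD_rep n j

lemma getD_rep_append (w : List ℕ) (r j : ℕ) (hj : j < r) :
    (List.replicate r (0:ℕ) ++ w).getD j 0 = 0 := by
  induction r generalizing j with
  | zero => omega
  | succ r ih =>
    cases j with
    | zero => simp [List.replicate_succ]
    | succ j => simpa [List.replicate_succ] using ih j (by omega)

lemma gap_cons (lam : ℕ → ℕ) (h1 : 1 ≤ lam 1) (d : ℕ) (t : List ℕ) :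
    Gap lam (d :: t) ↔
      (∀ j < mu lam d - 1, t.getD j 0 = 0) ∧ Gap lam (t.drop (mu lam d - 1)) := by
  set s := mu lam d - 1 with hs
  constructor
  · intro G
    refine ⟨fun j hj => ?_, fun i j hij hj => ?_⟩
    · have := G 0 (j+1) (by omega) (by simp only [List.getD_cons_zero]; omega)
      simpa using this
    · have harg : (d :: t).getD (s + i + 1) 0 = (t.drop s).getD i 0 := by
        rw [List.getD_cons_succ, getD_drop]
      have := G (s + i + 1) (s + j + 1) (by omega) (by rw [harg]; omega)
      rw [List.getD_cons_succ, ← getD_drop] at this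
      exact this
  · rintro ⟨hz, G'⟩ i j hij hj
    cases i with
    | zero =>
      rw [List.getD_cons_zero] at hj
      obtain ⟨j', rfl⟩ : ∃ j', j = j' + 1 := ⟨j - 1, by omega⟩
      rw [List.getD_cons_succ]
      exact hz j' (by omega)
    | succ i' =>
      rw [List.getD_cons_succ] at hj
      obtain ⟨j', rfl⟩ : ∃ j', j = j' + 1 := ⟨j - 1, by omega⟩
      rw [List.getD_cons_succ]
      by_cases hi' : i' < s
      · exfalso
        rw [hz i' hi', mu_zero_eq_one lam h1] at hj
        omega
      · push_neg at hi'
        have harg : t.getD i' 0 = (t.drop s).getD (i' - s) 0 := by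
          rw [getD_drop]; congr 1; omega
        have := G' (i' - s) (j' - s) (by omega) (by rw [← harg]; omega)
        rw [getD_drop] at this
        rw [show s + (j' - s) = j' by omega] at this
        exact this

lemma gap_iff_cond (lam : ℕ → ℕ) (l : List ℕ) :
    (∀ i j : ℕ, i < j → j < i + mu lam (l.getD i 0) → j < l.length → l.getD j 0 = 0)
      ↔ Gap lam l := by
  constructor
  · intro h i j hij hj
    by_cases hlen : j < l.length
    · exact h i j hij hj hlen
    · exact List.getD_eq_default _ _ (by omega)
  · intro h i j hij hj _
    exact h i j hij hj

/-- all lists of length `m` with entries `< Λ` -/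
def lists (Λ : ℕ) : ℕ → Finset (List ℕ)
  | 0 => {[]}
  | (m+1) => (Finset.range Λ ×ˢ lists Λ m).image (fun p => p.1 :: p.2)

lemma mem_lists (Λ : ℕ) : ∀ (m : ℕ) (l : List ℕ),
    l ∈ lists Λ m ↔ l.length = m ∧ ∀ x ∈ l, x < Λ := by
  intro m
  induction m with
  | zero => intro l; simp [lists, List.length_eq_zero_iff]; rintro rfl; simp
  | succ m ih =>
    intro l
    simp only [lists, Finset.mem_image, Finset.mem_product, Finset.mem_range, Prod.exists]
    constructor
    · rintro ⟨d, w, ⟨hd, hw⟩, rfl⟩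
      obtain ⟨hlen, hmem⟩ := (ih w).mp hw
      refine ⟨by simp [hlen], ?_⟩
      intro x hx
      rcases List.mem_cons.mp hx with rfl | hx
      · exact hd
      · exact hmem x hx
    · rintro ⟨hlen, hmem⟩
      cases l with
      | nil => simp at hlen
      | cons d w =>
        refine ⟨d, w, ⟨hmem d (by simp), (ih w).mpr ⟨by simpa using hlen, fun x hx => hmem x (by simp [hx])⟩⟩, rfl⟩

open Classical in
noncomputable def Wfin (lam : ℕ → ℕ) (k m : ℕ) : Finset (List ℕ) :=
  (lists (Lam lam k) m).filter (fun l => Gap lam l)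

open Classical in
lemma mem_Wfin (lam : ℕ → ℕ) (k m : ℕ) (l : List ℕ) :
    l ∈ Wfin lam k m ↔ l.length = m ∧ (∀ x ∈ l, x < Lam lam k) ∧ Gap lam l := by
  simp [Wfin, mem_lists, and_assoc]

lemma Wfin_decomp (lam : ℕ → ℕ) (k : ℕ) (hk : 1 ≤ k) (h1 : 1 ≤ lam 1) (m : ℕ) :
    Wfin lam k (m+1) = (Finset.range (Lam lam k)).biUnion (fun d =>
      (Wfin lam k (m + 1 - mu lam d)).image
        (fun w => d :: (List.replicate ((mu lam d - 1) ⊓ m) 0 ++ w))) := by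
  ext l
  simp only [Finset.mem_biUnion, Finset.mem_range, Finset.mem_image]
  constructor
  · intro hl
    obtain ⟨hlen, hmem, hgap⟩ := (mem_Wfin lam k (m+1) l).mp hl
    cases l with
    | nil => simp at hlen
    | cons d t =>
      have hd : d < Lam lam k := hmem d (by simp)
      have hmu : 1 ≤ mu lam d := mu_pos k lam hd
      set s := mu lam d - 1 with hsdef
      have htlen : t.length = m := by simpa using hlen
      obtain ⟨hz, G'⟩ := (gap_cons lam h1 d t).mp hgap
      refine ⟨d, hd, t.drop s, ?_, ?_⟩
      · rw [mem_Wfin]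
        refine ⟨by rw [List.length_drop]; omega, fun x hx => hmem x (by
          simp [List.mem_cons, (List.mem_of_mem_drop hx)]), G'⟩
      · have key : t = List.replicate (s ⊓ m) 0 ++ t.drop s := by
          rcases le_total s m with h | h
          · rw [min_eq_left h]
            exact eq_rep_append t s (by omega) (fun j hj => hz j (by omega))
          · rw [min_eq_right h]
            have h2 := eq_rep_append t m (by omega) (fun j hj => hz j (by omega))
            rw [List.drop_eq_nil_of_le (by omega : t.length ≤ s)]
            rw [List.drop_eq_nil_of_le (by omega : t.length ≤ m)] at h2
            simpa using h2
        rw [← key]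
  · rintro ⟨d, hd, w, hw, rfl⟩
    obtain ⟨hwlen, hwmem, hwgap⟩ := (mem_Wfin _ _ _ w).mp hw
    have hmu : 1 ≤ mu lam d := mu_pos k lam hd
    set s := mu lam d - 1 with hsdef
    have hsum : s ⊓ m + (m + 1 - mu lam d) = m := by
      rcases le_total s m with h | h
      · rw [min_eq_left h]; omega
      · rw [min_eq_right h]; omega
    rw [mem_Wfin]
    refine ⟨by
      simp only [List.length_cons, List.length_append, List.length_replicate, hwlen]
      omega, ?_, ?_⟩
    · intro x hx
      rcases List.mem_cons.mp hx with rfl | hx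
      · exact hd
      · rcases List.mem_append.mp hx with hx | hx
        · rw [List.eq_of_mem_replicate hx]
          exact lt_of_lt_of_le (Lam_pos lam h1 hk) (le_refl _)
        · exact hwmem x hx
    · rw [gap_cons lam h1]
      constructor
      · intro j hj
        by_cases hjr : j < s ⊓ m
        · exact getD_rep_append w _ j hjr
        · apply List.getD_eq_default
          simp [hwlen]
          omega
      · rcases le_total s m with h | h
        · rw [min_eq_left h]
          have : (List.replicate s (0:ℕ) ++ w).drop s = w := by
            have : List.drop (List.length (List.replicate s (0:ℕ))) (List.replicate s (0:ℕ) ++ w) = w := List.drop_left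
            rwa [List.length_replicate] at this
          rw [show mu lam d - 1 = s from rfl, this]
          exact hwgap
        · have : (List.replicate (s ⊓ m) (0:ℕ) ++ w).drop (mu lam d - 1) = [] := by
            apply List.drop_eq_nil_of_le
            simp only [List.length_append, List.length_replicate, hwlen]
            omega
          rw [this]; exact gap_nil lam

lemma Wfin_card_rec (lam : ℕ → ℕ) (k : ℕ) (hk : 1 ≤ k) (h1 : 1 ≤ lam 1) (m : ℕ) :
    (Wfin lam k (m+1)).card
      = ∑ j ∈ Finset.Icc 1 k, lam j * (Wfin lam k (m+1-j)).card := by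
  rw [Wfin_decomp lam k hk h1 m]
  rw [Finset.card_biUnion (by
    intro x hx y hy hxy
    rw [Function.onFun, Finset.disjoint_left]
    rintro l hlx hly
    obtain ⟨wx, _, hex⟩ := Finset.mem_image.mp hlx
    obtain ⟨wy, _, hey⟩ := Finset.mem_image.mp hly
    rw [← hey] at hex
    exact hxy (List.head_eq_of_cons_eq hex))]
  have himg : ∀ d ∈ Finset.range (Lam lam k),
      ((Wfin lam k (m + 1 - mu lam d)).image
        (fun w => d :: (List.replicate ((mu lam d - 1) ⊓ m) 0 ++ w))).card
      = (Wfin lam k (m + 1 - mu lam d)).card := by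
    intro d _
    apply Finset.card_image_of_injective
    intro w1 w2 h
    have := List.tail_eq_of_cons_eq h
    exact List.append_cancel_left this
  rw [Finset.sum_congr rfl himg]
  rw [← Finset.sum_fiberwise_of_maps_to (g := mu lam) (t := Finset.Icc 1 k)
    (fun d hd => Finset.mem_Icc.mpr
      ⟨mu_pos k lam (Finset.mem_range.mp hd), mu_le_k k lam (Finset.mem_range.mp hd)⟩)]
  refine Finset.sum_congr rfl (fun j hj => ?_)
  rw [Finset.sum_congr rfl (fun d hd => by
    rw [(Finset.mem_filter.mp hd).2]), Finset.sum_const, fiber_card k lam j hj,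
    smul_eq_mul]

lemma Wfin_card (lam : ℕ → ℕ) (k : ℕ) (hk : 1 ≤ k) (h1 : 1 ≤ lam 1)
    (a : ℤ → ℤ) (ha0 : ∀ i : ℤ, i ≤ 0 → a i = 1)
    (harec : ∀ n : ℤ, 1 ≤ n → a n = ∑ i ∈ Finset.Icc 1 k, (lam i : ℤ) * a (n - i)) :
    ∀ m : ℕ, ((Wfin lam k m).card : ℤ) = a m := by
  intro m
  induction m using Nat.strong_induction_on with
  | _ m ih =>
    match m with
    | 0 =>
      have : Wfin lam k 0 = {[]} := by
        ext l
        rw [mem_Wfin]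
        simp [List.length_eq_zero_iff]
        rintro rfl
        exact ⟨fun x hx => absurd hx List.not_mem_nil, gap_nil lam⟩
      rw [this]
      simp [ha0 0 le_rfl]
    | (m+1) =>
      rw [Wfin_card_rec lam k hk h1 m]
      push_cast
      rw [harec ((m:ℤ)+1) (by omega)]
      refine Finset.sum_congr rfl (fun j hj => ?_)
      obtain ⟨hj1, hjk⟩ := Finset.mem_Icc.mp hj
      congr 1
      by_cases hle : j ≤ m + 1
      · rw [ih (m+1-j) (by omega)]
        congr 1
        omega
      · have h0 : m + 1 - j = 0 := by omega
        rw [h0, ih 0 (by omega), ha0 _ (by omega : (0:ℕ) ≤ (0:ℤ)), ha0 _ (by omega)]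

open Classical in
noncomputable def Vfin (lam : ℕ → ℕ) (k t : ℕ) : Finset (List ℕ) :=
  (Finset.range (t+1)).biUnion (fun m => (lists (Lam lam k) m).filter (AValid lam k))

open Classical in
lemma mem_Vfin (lam : ℕ → ℕ) (k t : ℕ) (l : List ℕ) :
    l ∈ Vfin lam k t ↔ AValid lam k l ∧ l.length ≤ t := by
  simp only [Vfin, Finset.mem_biUnion, Finset.mem_range, Finset.mem_filter, mem_lists]
  constructor
  · rintro ⟨m, hm, ⟨hlen, _⟩, hv⟩
    exact ⟨hv, by omega⟩
  · rintro ⟨hv, hlen⟩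
    exact ⟨l.length, by omega, ⟨rfl, hv.2.1⟩, hv⟩

lemma valid_getD_last (lam : ℕ → ℕ) (k : ℕ) (l : List ℕ) (hv : AValid lam k l) :
    l.getD (l.length - 1) 0 ≠ 0 := by
  obtain ⟨hne, _, hlast, _⟩ := hv
  rw [List.getD_eq_getElem l 0 (by
    have := List.length_pos_iff.mpr hne
    omega)]
  intro h
  apply hlast
  rw [List.getLast?_eq_getLast hne, List.getLast_eq_getElem]
  simp [h]

lemma valid_ext (lam : ℕ → ℕ) (k : ℕ) (l₁ l₂ : List ℕ)
    (h₁ : AValid lam k l₁) (h₂ : AValid lam k l₂)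
    (h : ∀ i, l₁.getD i 0 = l₂.getD i 0) : l₁ = l₂ := by
  have key : ∀ la lb : List ℕ, AValid lam k la → AValid lam k lb →
      (∀ i, la.getD i 0 = lb.getD i 0) → la.length ≤ lb.length := by
    intro la lb hva hvb hab
    by_contra hlt
    push_neg at hlt
    have h1 := valid_getD_last lam k la hva
    have h2 := hab (la.length - 1)
    rw [List.getD_eq_default lb 0 (by
      have := List.length_pos_iff.mpr hva.1
      omega)] at h2
    exact h1 h2
  have hlen : l₁.length = l₂.length :=
    le_antisymm (key l₁ l₂ h₁ h₂ h) (key l₂ l₁ h₂ h₁ (fun i => (h i).symm))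
  apply List.ext_getElem hlen
  intro i hi1 hi2
  have := h i
  rwa [List.getD_eq_getElem l₁ 0 hi1, List.getD_eq_getElem l₂ 0 hi2] at this

lemma Vfin_card_succ (lam : ℕ → ℕ) (k : ℕ) (hk : 1 ≤ k) (h1 : 1 ≤ lam 1) (t : ℕ) :
    (Vfin lam k t).card + 1 = (Wfin lam k t).card := by
  classical
  have hpadmem : ∀ l ∈ Vfin lam k t,
      l ++ List.replicate (t - l.length) 0 ∈ Wfin lam k t := by
    intro l hl
    obtain ⟨hv, hlen⟩ := (mem_Vfin lam k t l).mp hl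
    rw [mem_Wfin]
    refine ⟨by simp; omega, ?_, ?_⟩
    · intro x hx
      rcases List.mem_append.mp hx with hx | hx
      · exact hv.2.1 x hx
      · rw [List.eq_of_mem_replicate hx]
        exact Lam_pos lam h1 hk
    · intro i j hij hj
      rw [getD_append_rep] at hj ⊢
      exact ((gap_iff_cond lam l).mp hv.2.2.2) i j hij hj
  have himg : Wfin lam k t =
      (Vfin lam k t).image (fun l => l ++ List.replicate (t - l.length) 0)
        ∪ {List.replicate t 0} := by
    ext w
    simp only [Finset.mem_union, Finset.mem_image, Finset.mem_singleton]
    constructor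
    · intro hw
      obtain ⟨hwlen, hwmem, hwgap⟩ := (mem_Wfin lam k t w).mp hw
      obtain ⟨l, s, rfl, hl⟩ := strip_zeros w
      by_cases hnil : l = []
      · right
        subst hnil
        simp only [List.nil_append] at hwlen ⊢
        rw [List.length_replicate] at hwlen
        rw [hwlen]
      · left
        have hlast : l.getLast? ≠ some 0 := by
          rcases hl with h | h
          · exact absurd h hnil
          · exact h
        have hlv : AValid lam k l := by
          refine ⟨hnil, fun x hx => hwmem x (List.mem_append_left _ hx), hlast, ?_⟩
        
          rw [gap_iff_cond]
          intro i j hij hj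
          have := hwgap i j hij (by rw [getD_append_rep]; exact hj)
          rwa [getD_append_rep] at this
        have hllen : l.length + s = t := by
          simpa using hwlen
        refine ⟨l, (mem_Vfin lam k t l).mpr ⟨hlv, by omega⟩, ?_⟩
        congr 1
        congr 1
        omega
    · rintro (⟨l, hl, rfl⟩ | rfl)
      · exact hpadmem l hl
      · rw [mem_Wfin]
        refine ⟨by simp, fun x hx => by
          rw [List.eq_of_mem_replicate hx]; exact Lam_pos lam h1 hk,
          gap_rep lam t⟩
  rw [himg, Finset.card_union_of_disjoint (by
    rw [Finset.disjoint_left]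
    rintro w hw hw2
    rw [Finset.mem_singleton] at hw2
    obtain ⟨l, hl, rfl⟩ := Finset.mem_image.mp hw
    obtain ⟨hv, _⟩ := (mem_Vfin lam k t l).mp hl
    have h1' := valid_getD_last lam k l hv
    rw [← getD_append_rep l (t - l.length) (l.length - 1), hw2, getD_rep] at h1'
    exact h1' rfl)]
  rw [Finset.card_image_of_injOn (by
    intro l₁ hl₁ l₂ hl₂ heq
    obtain ⟨hv₁, _⟩ := (mem_Vfin lam k t l₁).mp hl₁
    obtain ⟨hv₂, _⟩ := (mem_Vfin lam k t l₂).mp hl₂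
    have heq' : l₁ ++ List.replicate (t - l₁.length) 0
        = l₂ ++ List.replicate (t - l₂.length) 0 := heq
    refine valid_ext lam k l₁ l₂ hv₁ hv₂ (fun i => ?_)
    rw [← getD_append_rep l₁ (t - l₁.length) i, ← getD_append_rep l₂ (t - l₂.length) i, heq']),
    Finset.card_singleton]

section apos
variable (k : ℕ) (lam : ℕ → ℕ) (a : ℤ → ℤ)

lemma a_pos (hk : 1 ≤ k) (h1 : 1 ≤ lam 1)
    (ha0 : ∀ i : ℤ, i ≤ 0 → a i = 1)
    (harec : ∀ n : ℤ, 1 ≤ n → a n = ∑ i ∈ Finset.Icc 1 k, (lam i : ℤ) * a (n - i)) :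
    ∀ n : ℕ, 1 ≤ a n := by
  intro n
  induction n using Nat.strong_induction_on with
  | _ n ih =>
    match n with
    | 0 => simp [ha0 0 le_rfl]
    | (n+1) =>
      have key : ∀ i ∈ Finset.Icc 1 k, 1 ≤ a ((n:ℤ) + 1 - i) := by
        intro i hi
        obtain ⟨hi1, hik⟩ := Finset.mem_Icc.mp hi
        by_cases hle : (n:ℤ) + 1 - i ≤ 0
        · rw [ha0 _ hle]
        · push_neg at hle
          have : ((n + 1 - i : ℕ) : ℤ) = (n:ℤ) + 1 - i := by omega
          rw [← this]
          exact ih (n + 1 - i) (by omega)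
      push_cast
      rw [harec ((n:ℤ)+1) (by omega)]
      have hmem : (1:ℕ) ∈ Finset.Icc 1 k := Finset.mem_Icc.mpr ⟨le_rfl, hk⟩
      have hterm : (1:ℤ) ≤ (lam 1 : ℤ) * a ((n:ℤ) + 1 - ((1:ℕ):ℤ)) := by
        have h2 := key 1 hmem
        have h3 : (1:ℤ) ≤ (lam 1 : ℤ) := by exact_mod_cast h1
        nlinarith
      refine le_trans hterm
        (Finset.single_le_sum (f := fun i => (lam i : ℤ) * a ((n:ℤ) + 1 - i))
          (fun i hi => ?_) hmem)
      have := key i hi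
      positivity

lemma a_mono (hk : 1 ≤ k) (h1 : 1 ≤ lam 1)
    (ha0 : ∀ i : ℤ, i ≤ 0 → a i = 1)
    (harec : ∀ n : ℤ, 1 ≤ n → a n = ∑ i ∈ Finset.Icc 1 k, (lam i : ℤ) * a (n - i)) :
    ∀ s t : ℕ, s ≤ t → a s ≤ a t := by
  have step : ∀ n : ℕ, a n ≤ a ((n:ℤ) + 1) := by
    intro n
    have key : ∀ i ∈ Finset.Icc 1 k, 1 ≤ a ((n:ℤ) + 1 - i) := by
      intro i hi
      obtain ⟨hi1, hik⟩ := Finset.mem_Icc.mp hi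
      by_cases hle : (n:ℤ) + 1 - i ≤ 0
      · rw [ha0 _ hle]
      · push_neg at hle
        have : ((n + 1 - i : ℕ) : ℤ) = (n:ℤ) + 1 - i := by omega
        rw [← this]
        exact a_pos k lam a hk h1 ha0 harec (n + 1 - i)
    rw [harec ((n:ℤ)+1) (by omega)]
    have hmem : (1:ℕ) ∈ Finset.Icc 1 k := Finset.mem_Icc.mpr ⟨le_rfl, hk⟩
    have hterm : a (n:ℤ) ≤ (lam 1 : ℤ) * a ((n:ℤ) + 1 - ((1:ℕ):ℤ)) := by
      have h2 : ((n:ℤ) + 1 - ((1:ℕ):ℤ)) = (n:ℤ) := by push_cast; ring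
      rw [h2]
      have h3 : (1:ℤ) ≤ (lam 1 : ℤ) := by exact_mod_cast h1
      have h4 : (1:ℤ) ≤ a (n:ℤ) := a_pos k lam a hk h1 ha0 harec n
      nlinarith
    exact le_trans hterm
      (Finset.single_le_sum (f := fun i => (lam i : ℤ) * a ((n:ℤ) + 1 - i))
        (fun i hi => by have := key i hi; positivity) hmem)
  intro s t hst
  induction t with
  | zero => simp_all
  | succ t iht =>
    rcases Nat.lt_or_ge s (t+1) with h | h
    · calc a s ≤ a t := iht (by omega)
      _ ≤ a ((t:ℤ)+1) := step t
      _ = a ((t+1 : ℕ):ℤ) := by norm_num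
    · have : s = t + 1 := by omega
      subst this
      exact le_rfl

end apos

/-- the `a`-Zeckendorf representation of `N` (the `N`-th
`a`-valid sequence in length-then-lexicographic order, i.e. the valid
sequence with exactly `N - 1` predecessors) has exactly `t + 1` digits,
where `t` is determined by `a_t ≤ N < a_{t+1}`. -/
theorem stmt3 (k : ℕ) (lam : ℕ → ℕ) (hk : 1 ≤ k)
    (h1 : 1 ≤ lam 1) (hkpos : 1 ≤ lam k) (hzero : ∀ i, k < i → lam i = 0)
    (hΛ : 2 ≤ Lam lam k)
    (a : ℤ → ℤ)
    (ha0 : ∀ i : ℤ, i ≤ 0 → a i = 1)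
    (harec : ∀ n : ℤ, 1 ≤ n → a n = ∑ i ∈ Finset.Icc 1 k, (lam i : ℤ) * a (n - i)) :
    ∀ N : ℕ, 1 ≤ N → ∀ t : ℕ, a t ≤ (N : ℤ) → (N : ℤ) < a (t + 1) →
      ∀ l : List ℕ, AValid lam k l →
        Set.ncard {l' : List ℕ | AValid lam k l' ∧ ZOrd l' l} = N - 1 →
        l.length = t + 1 := by
  classical
  intro N hN t hat hat2 l hval hcard
  set L := l.length with hLdef
  have hL1 : 1 ≤ L := List.length_pos_iff.mpr hval.1
  set P : Finset (List ℕ) := (Vfin lam k L).filter (fun l' => ZOrd l' l) with hP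
  have hPset : {l' : List ℕ | AValid lam k l' ∧ ZOrd l' l} = ↑P := by
    ext l'
    simp only [Set.mem_setOf_eq, hP, Finset.coe_filter, mem_Vfin]
    constructor
    · rintro ⟨hv, hz⟩
      refine ⟨⟨hv, ?_⟩, hz⟩
      rcases hz with h | ⟨h, _⟩ <;> omega
    · rintro ⟨⟨hv, _⟩, hz⟩
      exact ⟨hv, hz⟩
  rw [hPset, Set.ncard_coe_finset] at hcard
  -- counting facts
  have hV : ∀ m : ℕ, ((Vfin lam k m).card : ℤ) = a m - 1 := by
    intro m
    have h2 := Vfin_card_succ lam k hk h1 m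
    have h3 := Wfin_card lam k hk h1 a ha0 harec m
    omega
  -- lower bound: a (L-1) ≤ N
  have hlow : a ((L:ℤ) - 1) ≤ (N:ℤ) := by
    have hsub : Vfin lam k (L-1) ⊆ P := by
      intro l' hl'
      obtain ⟨hv, hlen⟩ := (mem_Vfin lam k (L-1) l').mp hl'
      rw [hP, Finset.mem_filter, mem_Vfin]
      exact ⟨⟨hv, by omega⟩, Or.inl (by omega)⟩
    have hcardle := Finset.card_le_card hsub
    have h4 := hV (L-1)
    have : ((L - 1 : ℕ) : ℤ) = (L:ℤ) - 1 := by omega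
    rw [this] at h4
    omega
  -- upper bound: N < a L
  have hup : (N:ℤ) < a (L:ℤ) := by
    have hssub : P ⊂ Vfin lam k L := by
      rw [Finset.ssubset_iff_of_subset (Finset.filter_subset _ _)]
      refine ⟨l, (mem_Vfin lam k L l).mpr ⟨hval, le_rfl⟩, ?_⟩
      rw [Finset.mem_filter]
      rintro ⟨-, h | ⟨-, hlex⟩⟩
      · omega
      · exact lex_irrefl _ hlex
    have hcardlt := Finset.card_lt_card hssub
    have h4 := hV L
    omega
  -- compare
  have hmono := a_mono k lam a hk h1 ha0 harec
  have htL : t < L := by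
    by_contra h
    push_neg at h
    have := hmono L t h
    omega
  have hLt : L ≤ t + 1 := by
    by_contra h
    push_neg at h
    have h5 := hmono (t+1) (L-1) (by omega)
    have e1 : ((t + 1 : ℕ) : ℤ) = (t:ℤ) + 1 := by omega
    have e2 : ((L - 1 : ℕ) : ℤ) = (L:ℤ) - 1 := by omega
    rw [e1, e2] at h5
    omega
  omega
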